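/- The category OWF of all open well-filtered spaces (a full subcategory of Top₀) is not reflective in Top₀, i.e., the inclusion functor OWF → Top₀ has no left adjoint. -/

import Mathlib

open TopologicalSpace

/-- The b-topology associated with a topological space `(X, t)`: the topology with base
`{U ∩ cl({x}) : x ∈ U, U open}`. -/
def bTop (X : Type) (t : TopologicalSpace X) : TopologicalSpace X :=
  TopologicalSpace.generateFrom
    {s | ∃ (U : Set X) (x : X), @IsOpen X t U ∧ x ∈ U ∧ s = U ∩ @closure X t {x}}

/-- The specialization order of `(X, t)`: `x ≤ y` iff `x ∈ cl({y})`. -/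
def specLE {X : Type} (t : TopologicalSpace X) (x y : X) : Prop :=
  x ∈ @closure X t {y}

/-- The subspace topology on a subset. -/
def subTop {X : Type} (t : TopologicalSpace X) (A : Set X) : TopologicalSpace A :=
  TopologicalSpace.induced Subtype.val t

/-- A class of topological spaces, viewed as the object class of a full subcategory of Top. -/
abbrev SpaceClass : Type 1 := (X : Type) → TopologicalSpace X → Prop

/-- All members of `K` are T₀ (i.e. `K` is a subcategory of `Top₀`). -/
def AllT0 (K : SpaceClass) : Prop := ∀ X t, K X t → @T0Space X t

/-- `K` is closed under homeomorphisms. -/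
def ClosedUnderHomeo (K : SpaceClass) : Prop :=
  ∀ (X Y : Type) (tX : TopologicalSpace X) (tY : TopologicalSpace Y),
    K X tX → Nonempty (@Homeomorph X Y tX tY) → K Y tY

/-- `K ⊄ Top₁`: `K` contains a space that is not T₁. -/
def NotSubT1 (K : SpaceClass) : Prop := ∃ X t, K X t ∧ ¬ @T1Space X t

/-- `μ : X → Xk` is a K-reflection for `X`: `Xk ∈ K`, `μ` is continuous and every continuous map
from `X` to a member of `K` factors uniquely (continuously) through `μ`. -/
def IsReflection (K : SpaceClass) {X Xk : Type} (tX : TopologicalSpace X)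
    (tk : TopologicalSpace Xk) (μ : X → Xk) : Prop :=
  K Xk tk ∧ @Continuous X Xk tX tk μ ∧
    ∀ (Z : Type) (tZ : TopologicalSpace Z), K Z tZ →
      ∀ f : X → Z, @Continuous X Z tX tZ f →
        ∃! g : Xk → Z, @Continuous Xk Z tk tZ g ∧ g ∘ μ = f

/-- `K` is reflective in `Top₀`: every T₀ space admits a K-reflection. -/
def IsReflective (K : SpaceClass) : Prop :=
  ∀ (X : Type) (tX : TopologicalSpace X), @T0Space X tX →
    ∃ (Xk : Type) (tk : TopologicalSpace Xk) (μ : X → Xk), IsReflection K tX tk μ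

/-- `K` is b-closed-hereditary. -/
def BClosedHereditary (K : SpaceClass) : Prop :=
  ∀ (X : Type) (tX : TopologicalSpace X) (A : Set X),
    K X tX → @IsClosed X (bTop X tX) A → K A (subTop tX A)

/-- `K` is productive. -/
def Productive (K : SpaceClass) : Prop :=
  ∀ (I : Type) (X : I → Type) (t : ∀ i, TopologicalSpace (X i)),
    (∀ i, K (X i) (t i)) → K (∀ i, X i) (@Pi.topologicalSpace I X t)

/-- `K` has equalizers. -/
def HasEqualizers (K : SpaceClass) : Prop :=
  ∀ (X Y : Type) (tX : TopologicalSpace X) (tY : TopologicalSpace Y),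
    K X tX → K Y tY → ∀ f g : X → Y, @Continuous X Y tX tY f → @Continuous X Y tX tY g →
      K {x | f x = g x} (subTop tX {x | f x = g x})

/-- `(X, t)` is sober: T₀ and every irreducible closed set is the closure of a point. -/
def Sober (X : Type) (t : TopologicalSpace X) : Prop := @T0Space X t ∧ @QuasiSober X t

/-- `U` is way below `V` in the lattice of open sets of `(X, t)`: whenever `V` is contained in
the union of a (nonempty) directed family of open sets, `U` is contained in some member. -/
def WayBelowOpen {X : Type} (t : TopologicalSpace X) (U V : Set X) : Prop :=
  ∀ D : Set (Set X), D.Nonempty → (∀ W ∈ D, @IsOpen X t W) → DirectedOn (· ⊆ ·) D →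
    V ⊆ ⋃₀ D → ∃ W ∈ D, U ⊆ W

/-- A T₀ space is open well-filtered if for every (nonempty) `≪`-filtered family `F` of open
sets and every open `U`, `⋂F ⊆ U` implies `V ⊆ U` for some `V ∈ F`. -/
def OpenWellFiltered (X : Type) (t : TopologicalSpace X) : Prop :=
  ∀ F : Set (Set X), F.Nonempty → (∀ U ∈ F, @IsOpen X t U) →
    (∀ U₁ ∈ F, ∀ U₂ ∈ F, ∃ U₃ ∈ F, WayBelowOpen t U₃ U₁ ∧ WayBelowOpen t U₃ U₂) →
    ∀ U : Set X, @IsOpen X t U → ⋂₀ F ⊆ U → ∃ V ∈ F, V ⊆ U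

/-- The full subcategory of open well-filtered spaces. -/
def OWFClass : SpaceClass := fun X t => @T0Space X t ∧ OpenWellFiltered X t

section Statement19Aux

open Set

/-! ### The Sierpinski space on Bool -/

def tS : TopologicalSpace Bool where
  IsOpen U := true ∈ U ∨ U = ∅
  isOpen_univ := Or.inl trivial
  isOpen_inter := by
    rintro U V (hU | rfl) (hV | rfl)
    · exact Or.inl ⟨hU, hV⟩
    all_goals simp
  isOpen_sUnion := by
    intro S hS
    by_cases h : ∃ U ∈ S, true ∈ U
    · obtain ⟨U, hU, hT⟩ := h; exact Or.inl ⟨U, hU, hT⟩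
    · push_neg at h
      refine Or.inr (Set.sUnion_eq_empty.mpr fun U hU => ?_)
      rcases hS U hU with h' | h'
      · exact absurd h' (h U hU)
      · exact h'

lemma tS_t0 : @T0Space Bool tS := by
  letI := tS
  constructor
  intro x y h
  have h1 := (inseparable_iff_forall_isOpen.mp h) {true} (Or.inl rfl)
  cases x <;> cases y <;> simp_all

lemma tS_owf : OpenWellFiltered Bool tS := by
  intro F hFne hFopen _ U hU hsub
  by_cases hempty : (∅ : Set Bool) ∈ F
  · exact ⟨∅, hempty, Set.empty_subset U⟩
  have htrue : ∀ V ∈ F, true ∈ V := by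
    intro V hV
    rcases hFopen V hV with h | rfl
    · exact h
    · exact absurd hV hempty
  have htU : true ∈ U := hsub (Set.mem_sInter.mpr fun V hV => htrue V hV)
  by_cases hall : ∀ V ∈ F, V = Set.univ
  · obtain ⟨V, hV⟩ := hFne
    exact ⟨V, hV, fun x _ => hsub (Set.mem_sInter.mpr fun W hW => by rw [hall W hW]; trivial)⟩
  · push_neg at hall
    obtain ⟨V₀, hV₀F, hV₀ne⟩ := hall
    have hVs : V₀ = {true} := by
      ext b
      cases b
      · simp only [Set.mem_singleton_iff]
        constructor
        · intro hf
          exfalso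
          apply hV₀ne
          ext c; cases c <;> simp [htrue V₀ hV₀F, hf]
        · intro h; exact absurd h (by simp)
      · simp [htrue V₀ hV₀F]
    exact ⟨V₀, hV₀F, by rw [hVs]; exact Set.singleton_subset_iff.mpr htU⟩

/-! ### The characteristic map into Sierpinski space -/

open scoped Classical in
noncomputable def chi {X : Type} (U : Set X) : X → Bool :=
  fun x => if x ∈ U then true else false

lemma chi_eq_true {X : Type} (U : Set X) (x : X) : chi U x = true ↔ x ∈ U := by
  by_cases h : x ∈ U <;> simp [chi, h]

lemma chi_comp {X Y : Type} (V : Set Y) (μ : X → Y) : chi V ∘ μ = chi (μ ⁻¹' V) := by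
  funext x
  by_cases h : μ x ∈ V <;> simp [chi, Function.comp, h]

lemma chi_continuous {X : Type} (t : TopologicalSpace X) (U : Set X) (hU : @IsOpen X t U) :
    @Continuous X Bool t tS (chi U) := by
  rw [continuous_def]
  intro s hs
  rcases hs with hT | rfl
  · by_cases hF : false ∈ s
    · have hs' : chi U ⁻¹' s = Set.univ := by
        ext x
        cases h : chi U x <;> simp [Set.mem_preimage, h, hF, hT]
      rw [hs']
      exact @isOpen_univ X t
    · have hs' : chi U ⁻¹' s = U := by
        ext x
        by_cases h : x ∈ U <;> simp [chi, h, hT, hF]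
      rwa [hs']
  · rw [Set.preimage_empty]
    exact @isOpen_empty X t

/-! ### The cofinite topology on ℕ -/

def tA : TopologicalSpace ℕ where
  IsOpen U := U = ∅ ∨ (Uᶜ).Finite
  isOpen_univ := Or.inr (by simp)
  isOpen_inter := by
    rintro U V (rfl | hU) (rfl | hV)
    · simp
    · simp
    · simp
    · exact Or.inr (by rw [Set.compl_inter]; exact hU.union hV)
  isOpen_sUnion := by
    intro S hS
    by_cases h : ∃ U ∈ S, U ≠ ∅
    · obtain ⟨U, hUS, hUne⟩ := h
      rcases hS U hUS with rfl | hUf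
      · exact absurd rfl hUne
      · exact Or.inr (hUf.subset (Set.compl_subset_compl.mpr (Set.subset_sUnion_of_mem hUS)))
    · push_neg at h
      exact Or.inl (Set.sUnion_eq_empty.mpr h)

lemma tA_t0 : @T0Space ℕ tA := by
  letI := tA
  constructor
  intro x y h
  by_contra hxy
  have h1 := (inseparable_iff_forall_isOpen.mp h) ({y}ᶜ)
    (Or.inr (by simp))
  have hyn : y ∉ ({y}ᶜ : Set ℕ) := fun hy => hy rfl
  have hxn : x ∉ ({y}ᶜ : Set ℕ) := fun hx => hyn (h1.mp hx)
  exact hxn hxy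

/-- Every open of the cofinite topology is "compact": any directed open cover of it
has a single member containing it. -/
lemma tA_compact (U : Set ℕ) (hU : U = ∅ ∨ (Uᶜ).Finite) (D : Set (Set ℕ))
    (hDne : D.Nonempty) (hDopen : ∀ W ∈ D, W = ∅ ∨ (Wᶜ).Finite)
    (hdir : DirectedOn (· ⊆ ·) D) (hcov : U ⊆ ⋃₀ D) :
    ∃ W ∈ D, U ⊆ W := by
  rcases hU with rfl | hUf
  · exact ⟨hDne.choose, hDne.choose_spec, by simp⟩
  by_cases hex : ∃ W ∈ D, W.Nonempty
  · obtain ⟨W₀, hW₀D, hW₀ne⟩ := hex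
    have hW₀f : (W₀ᶜ).Finite := by
      rcases hDopen W₀ hW₀D with rfl | h
      · exact absurd hW₀ne (by simp)
      · exact h
    have key : ∀ s : Finset ℕ, (↑s : Set ℕ) ⊆ ⋃₀ D → ∃ W ∈ D, W₀ ⊆ W ∧ (↑s : Set ℕ) ⊆ W := by
      intro s
      induction s using Finset.induction_on with
      | empty => exact fun _ => ⟨W₀, hW₀D, subset_rfl, by simp⟩
      | @insert a s ha ih =>
        intro hsub
        have hs' : (↑s : Set ℕ) ⊆ ⋃₀ D := by
          intro x hx
          exact hsub (by simp [hx])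
        obtain ⟨W₁, hW₁D, hW₀₁, hs₁⟩ := ih hs'
        have haD : a ∈ ⋃₀ D := hsub (by simp)
        obtain ⟨Wa, hWaD, haWa⟩ := haD
        obtain ⟨W₂, hW₂D, h12, ha2⟩ := hdir W₁ hW₁D Wa hWaD
        refine ⟨W₂, hW₂D, hW₀₁.trans h12, ?_⟩
        intro x hx
        rcases Finset.mem_insert.mp (by exact_mod_cast hx) with rfl | hxs
        · exact ha2 haWa
        · exact h12 (hs₁ hxs)
    have hTfin : (U \ W₀).Finite := hW₀f.subset (fun x hx => hx.2)
    obtain ⟨W, hWD, hW0W, hsW⟩ := key hTfin.toFinset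
      (by rw [Set.Finite.coe_toFinset]; exact fun x hx => hcov hx.1)
    refine ⟨W, hWD, fun x hx => ?_⟩
    by_cases hxW : x ∈ W₀
    · exact hW0W hxW
    · exact hsW (by rw [Set.Finite.coe_toFinset]; exact ⟨hx, hxW⟩)
  · push_neg at hex
    have hDe : ⋃₀ D = ∅ :=
      Set.sUnion_eq_empty.mpr fun W hW => hex W hW
    exact ⟨hDne.choose, hDne.choose_spec, fun x hx => absurd (hcov hx) (by simp [hDe])⟩

end Statement19Aux

section Statement19Johnstone

open Set

/-! ### Johnstone's space: `ℕ × Option ℕ` with the Scott topology of Johnstone's dcpo.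
`(m, some k)` is the point `(m, k)`, and `(m, none)` is the maximal point `(m, ω)`. -/

abbrev JT : Type := ℕ × Option ℕ

def JOpen (V : Set JT) : Prop :=
  (∀ m k k', k ≤ k' → (m, some k) ∈ V → (m, some k') ∈ V) ∧
  (∀ m k, (m, some k) ∈ V → (m, none) ∈ V) ∧
  (∀ m k m', k ≤ m' → (m, some k) ∈ V → (m', none) ∈ V) ∧
  (∀ m, (m, none) ∈ V → ∃ k, (m, some k) ∈ V)

def tJ : TopologicalSpace JT where
  IsOpen := JOpen
  isOpen_univ :=
    ⟨fun _ _ _ _ _ => trivial, fun _ _ _ => trivial, fun _ _ _ _ _ => trivial,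
      fun _ _ => ⟨0, trivial⟩⟩
  isOpen_inter := by
    rintro U V ⟨hU1, hU2, hU3, hU4⟩ ⟨hV1, hV2, hV3, hV4⟩
    refine ⟨?_, ?_, ?_, ?_⟩
    · exact fun m k k' h hm => ⟨hU1 m k k' h hm.1, hV1 m k k' h hm.2⟩
    · exact fun m k hm => ⟨hU2 m k hm.1, hV2 m k hm.2⟩
    · exact fun m k m' h hm => ⟨hU3 m k m' h hm.1, hV3 m k m' h hm.2⟩
    · intro m hm
      obtain ⟨k1, hk1⟩ := hU4 m hm.1
      obtain ⟨k2, hk2⟩ := hV4 m hm.2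
      exact ⟨max k1 k2, hU1 m k1 _ (le_max_left _ _) hk1, hV1 m k2 _ (le_max_right _ _) hk2⟩
  isOpen_sUnion := by
    intro S hS
    refine ⟨?_, ?_, ?_, ?_⟩
    · rintro m k k' h ⟨W, hWS, hmW⟩
      exact ⟨W, hWS, (hS W hWS).1 m k k' h hmW⟩
    · rintro m k ⟨W, hWS, hmW⟩
      exact ⟨W, hWS, (hS W hWS).2.1 m k hmW⟩
    · rintro m k m' h ⟨W, hWS, hmW⟩
      exact ⟨W, hWS, (hS W hWS).2.2.1 m k m' h hmW⟩
    · rintro m ⟨W, hWS, hmW⟩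
      obtain ⟨k, hk⟩ := (hS W hWS).2.2.2 m hmW
      exact ⟨k, W, hWS, hk⟩

/-- Complement of the down-set of the finite point `(m, k)`. -/
def Vfin (m k : ℕ) : Set JT := {x | x.1 = m ∧ ∃ j, x.2 = some j ∧ j ≤ k}ᶜ

/-- Complement of the down-set of the maximal point `(m, ω)`. -/
def Vmax (m : ℕ) : Set JT := {x | x.1 = m ∨ ∃ j, x.2 = some j ∧ j ≤ m}ᶜ

lemma Vfin_open (m k : ℕ) : JOpen (Vfin m k) := by
  refine ⟨?_, ?_, ?_, ?_⟩
  · intro m' i i' hii hmem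
    rintro ⟨rfl, j, hj, hjk⟩
    obtain rfl : i' = j := by injection hj
    exact hmem ⟨rfl, i, rfl, le_trans hii hjk⟩
  · rintro m' i _ ⟨_, j, hj, _⟩
    exact absurd hj.symm (Option.some_ne_none _)
  · rintro m' i m'' _ _ ⟨_, j, hj, _⟩
    exact absurd hj.symm (Option.some_ne_none _)
  · intro m' _
    refine ⟨k + 1, ?_⟩
    rintro ⟨_, j, hj, hjk⟩
    obtain rfl : k + 1 = j := by injection hj
    omega

lemma Vmax_open (m : ℕ) : JOpen (Vmax m) := by
  refine ⟨?_, ?_, ?_, ?_⟩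
  · intro m' i i' hii hmem
    rintro (h | ⟨j, hj, hjm⟩)
    · exact hmem (Or.inl h)
    · obtain rfl : i' = j := by injection hj
      exact hmem (Or.inr ⟨i, rfl, le_trans hii hjm⟩)
  · intro m' i hmem
    rintro (h | ⟨j, hj, _⟩)
    · exact hmem (Or.inl h)
    · exact absurd hj.symm (Option.some_ne_none _)
  · intro m' i m'' him hmem
    have hi : m < i := by
      by_contra h
      exact hmem (Or.inr ⟨i, rfl, by omega⟩)
    rintro (h | ⟨j, hj, _⟩)
    · subst h; omega
    · exact absurd hj.symm (Option.some_ne_none _)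
  · intro m' hmem
    refine ⟨m + 1, ?_⟩
    rintro (h | ⟨j, hj, hjm⟩)
    · exact hmem (Or.inl h)
    · obtain rfl : m + 1 = j := by injection hj
      omega

lemma tJ_t0 : @T0Space JT tJ := by
  letI := tJ
  constructor
  rintro ⟨mx, ox⟩ ⟨my, oy⟩ h
  have hiff := inseparable_iff_forall_isOpen.mp h
  rcases ox with _ | kx <;> rcases oy with _ | ky
  · -- none, none
    have h1 := hiff (Vmax my) (Vmax_open my)
    have hy : ((my, (none : Option ℕ)) : JT) ∉ Vmax my := fun hc => hc (Or.inl rfl)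
    have hx : ((mx, (none : Option ℕ)) : JT) ∉ Vmax my := fun hc => hy (h1.mp hc)
    have hmm : mx = my := by
      by_contra hne
      apply hx
      rintro (h | ⟨j, hj, _⟩)
      · exact hne h
      · exact absurd hj.symm (Option.some_ne_none _)
    rw [hmm]
  · -- none, some : contradiction
    have h1 := hiff (Vfin my ky) (Vfin_open my ky)
    have hy : ((my, some ky) : JT) ∉ Vfin my ky := fun hc => hc ⟨rfl, ky, rfl, le_refl ky⟩
    have hx : ((mx, (none : Option ℕ)) : JT) ∈ Vfin my ky := by
      rintro ⟨_, j, hj, _⟩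
      exact absurd hj.symm (Option.some_ne_none _)
    exact absurd (h1.mp hx) hy
  · -- some, none : contradiction
    have h1 := hiff (Vfin mx kx) (Vfin_open mx kx)
    have hx : ((mx, some kx) : JT) ∉ Vfin mx kx := fun hc => hc ⟨rfl, kx, rfl, le_refl kx⟩
    have hy : ((my, (none : Option ℕ)) : JT) ∈ Vfin mx kx := by
      rintro ⟨_, j, hj, _⟩
      exact absurd hj.symm (Option.some_ne_none _)
    exact absurd (h1.mpr hy) hx
  · -- some, some
    have h1 := hiff (Vfin mx kx) (Vfin_open mx kx)
    have h2 := hiff (Vfin my ky) (Vfin_open my ky)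
    have hx1 : ((mx, some kx) : JT) ∉ Vfin mx kx := fun hc => hc ⟨rfl, kx, rfl, le_refl kx⟩
    have hy2 : ((my, some ky) : JT) ∉ Vfin my ky := fun hc => hc ⟨rfl, ky, rfl, le_refl ky⟩
    have hy1 : ((my, some ky) : JT) ∉ Vfin mx kx := fun hc => hx1 (h1.mpr hc)
    have hx2 : ((mx, some kx) : JT) ∉ Vfin my ky := fun hc => hy2 (h2.mp hc)
    simp only [Vfin, Set.mem_compl_iff, Set.mem_setOf_eq, not_not] at hy1 hx2
    obtain ⟨h1', j1, hj1, hjk1⟩ := hy1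
    obtain ⟨h2', j2, hj2, hjk2⟩ := hx2
    obtain rfl : ky = j1 := by injection hj1
    obtain rfl : kx = j2 := by injection hj2
    subst h1'
    obtain rfl : kx = ky := le_antisymm hjk2 hjk1
    rfl

end Statement19Johnstone

section Statement19WayBelow

open Set

/-- The "escape" condition used in the adversarial directed family: at column `m`,
only points strictly above the least point of `U` in that column (or all points, if `U`
misses the column) are kept. -/
def QU (U : Set JT) (m k : ℕ) : Prop :=
  (∃ j < k, ((m, some j) : JT) ∈ U) ∨ (∀ j, ((m, some j) : JT) ∉ U)

lemma QU_mono (U : Set JT) (m : ℕ) {k k' : ℕ} (h : k ≤ k') (hq : QU U m k) : QU U m k' := by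
  rcases hq with ⟨j, hj, hjU⟩ | hn
  · exact Or.inl ⟨j, lt_of_lt_of_le hj h, hjU⟩
  · exact Or.inr hn

/-- Member of the adversarial directed family. -/
def WS (V U : Set JT) (S : Finset ℕ) : Set JT :=
  {x | x ∈ V ∧ ∀ k, x.2 = some k → (x.1 ∈ S ∨ QU U x.1 k)}

lemma WS_open (V U : Set JT) (hV : JOpen V) (S : Finset ℕ) : JOpen (WS V U S) := by
  obtain ⟨hV1, hV2, hV3, hV4⟩ := hV
  refine ⟨?_, ?_, ?_, ?_⟩
  · rintro m k k' hkk ⟨hxV, hcond⟩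
    refine ⟨hV1 m k k' hkk hxV, ?_⟩
    intro k'' hk''
    obtain rfl : k' = k'' := by injection hk''
    rcases hcond k rfl with hS | hQ
    · exact Or.inl hS
    · exact Or.inr (QU_mono U m hkk hQ)
  · rintro m k ⟨hxV, _⟩
    exact ⟨hV2 m k hxV, fun k'' h => absurd h.symm (Option.some_ne_none _)⟩
  · rintro m k m' hkm ⟨hxV, _⟩
    exact ⟨hV3 m k m' hkm hxV, fun k'' h => absurd h.symm (Option.some_ne_none _)⟩
  · rintro m ⟨hxV, _⟩
    obtain ⟨k0, hk0⟩ := hV4 m hxV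
    by_cases hmS : m ∈ S
    · refine ⟨k0, hk0, ?_⟩
      intro k'' h
      exact Or.inl hmS
    · by_cases hU' : ∃ j, ((m, some j) : JT) ∈ U
      · obtain ⟨j0, hj0⟩ := hU'
        refine ⟨max k0 (j0 + 1), hV1 m k0 _ (le_max_left _ _) hk0, ?_⟩
        intro k'' h
        obtain rfl : max k0 (j0 + 1) = k'' := by injection h
        exact Or.inr (Or.inl ⟨j0, lt_of_lt_of_le (Nat.lt_succ_self j0) (le_max_right _ _), hj0⟩)
      · push_neg at hU'
        exact ⟨k0, hk0, fun k'' h => Or.inr (Or.inr hU')⟩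

lemma WS_mono (V U : Set JT) {S S' : Finset ℕ} (h : S ⊆ S') : WS V U S ⊆ WS V U S' := by
  rintro x ⟨hxV, hcond⟩
  refine ⟨hxV, fun k hk => ?_⟩
  rcases hcond k hk with hS | hQ
  · exact Or.inl (h hS)
  · exact Or.inr hQ

/-- In Johnstone's space, no nonempty open set is way below any open set. -/
lemma J_not_wb (U V : Set JT) (hU : JOpen U) (hV : JOpen V) (hne : U.Nonempty) :
    ¬ WayBelowOpen tJ U V := by
  classical
  intro hwb
  -- U contains a finite point
  obtain ⟨⟨a0, oa⟩, ha0⟩ := hne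
  obtain ⟨a, b, hab⟩ : ∃ a b, ((a, some b) : JT) ∈ U := by
    rcases oa with _ | b
    · obtain ⟨k, hk⟩ := hU.2.2.2 a0 ha0
      exact ⟨a0, k, hk⟩
    · exact ⟨a0, b, ha0⟩
  obtain ⟨W, hWD, hUW⟩ := hwb (Set.range fun S : Finset ℕ => WS V U S)
    ⟨WS V U ∅, ⟨∅, rfl⟩⟩
    (by rintro W ⟨S, rfl⟩; exact WS_open V U hV S)
    (by
      rintro W1 ⟨S1, rfl⟩ W2 ⟨S2, rfl⟩
      exact ⟨WS V U (S1 ∪ S2), ⟨S1 ∪ S2, rfl⟩, WS_mono V U Finset.subset_union_left,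
        WS_mono V U Finset.subset_union_right⟩)
    (by
      rintro ⟨m, _ | k⟩ hx
      · exact ⟨WS V U ∅, ⟨∅, rfl⟩, hx, fun k h => absurd h.symm (Option.some_ne_none _)⟩
      · refine ⟨WS V U {m}, ⟨{m}, rfl⟩, hx, ?_⟩
        intro k'' h
        exact Or.inl (Finset.mem_singleton_self m))
  obtain ⟨S, rfl⟩ := hWD
  -- a fresh large column
  set m' := max b (S.sup id + 1) with hm'def
  have hm'S : m' ∉ S := by
    intro h
    have h1 : m' ≤ S.sup id := Finset.le_sup (f := id) h
    have h2 : S.sup id + 1 ≤ m' := le_max_right _ _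
    omega
  have hbm' : b ≤ m' := le_max_left _ _
  have hnone : ((m', none) : JT) ∈ U := hU.2.2.1 a b m' hbm' hab
  have hPex : ∃ k, ((m', some k) : JT) ∈ U := hU.2.2.2 m' hnone
  have hkmem : ((m', some (Nat.find hPex)) : JT) ∈ U := Nat.find_spec hPex
  have hmemW := hUW hkmem
  rcases hmemW.2 (Nat.find hPex) rfl with hS | hQ
  · exact hm'S hS
  · rcases hQ with ⟨j, hj, hjU⟩ | hnoneU
    · exact Nat.find_min hPex hj hjU
    · exact hnoneU _ hkmem

lemma tJ_owf : OpenWellFiltered JT tJ := by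
  intro F hFne hFopen hfil U hU hsub
  obtain ⟨U₁, hU₁⟩ := hFne
  obtain ⟨U₃, hU₃F, hwb, _⟩ := hfil U₁ hU₁ U₁ hU₁
  rcases Set.eq_empty_or_nonempty U₃ with rfl | hne
  · exact ⟨∅, hU₃F, Set.empty_subset U⟩
  · exact absurd hwb (J_not_wb U₃ U₁ (hFopen U₃ hU₃F) (hFopen U₁ hU₁) hne)

/-- The map sending `n` to the maximal point of the `n`-th column. -/
def fJ : ℕ → JT := fun n => (n, none)

lemma fJ_cont : @Continuous ℕ JT tA tJ fJ := by
  rw [continuous_def]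
  intro V hV
  by_cases h : ∃ p : ℕ × ℕ, ((p.1, some p.2) : JT) ∈ V
  · obtain ⟨⟨a, b⟩, hab⟩ := h
    refine Or.inr (Set.Finite.subset (Set.finite_Iio b) ?_)
    intro n hn
    simp only [Set.mem_compl_iff, Set.mem_preimage] at hn
    by_contra hlt
    simp only [Set.mem_Iio, not_lt] at hlt
    exact hn (hV.2.2.1 a b n hlt hab)
  · push_neg at h
    refine Or.inl ?_
    ext n
    simp only [Set.mem_preimage, Set.mem_empty_iff_false, iff_false]
    intro hnV
    obtain ⟨k, hk⟩ := hV.2.2.2 n hnV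
    exact h (n, k) hk

end Statement19WayBelow

/-- the category of open well-filtered spaces is not reflective in Top₀. -/
theorem statement19 : ¬ IsReflective OWFClass := by
  classical
  intro hrefl
  obtain ⟨R, tR, μ, hKR, hμc, huniv⟩ := hrefl ℕ tA tA_t0
  have hpre : ∀ V : Set R, @IsOpen R tR V → @IsOpen ℕ tA (μ ⁻¹' V) :=
    fun V hV => @Continuous.isOpen_preimage ℕ R tA tR μ hμc V hV
  have hKS : OWFClass Bool tS := ⟨tS_t0, tS_owf⟩
  have hKJ : OWFClass JT tJ := ⟨tJ_t0, tJ_owf⟩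
  -- μ-preimage is injective on open sets
  have hinj : ∀ V V', @IsOpen R tR V → @IsOpen R tR V' → μ ⁻¹' V = μ ⁻¹' V' → V = V' := by
    intro V V' hV hV' hpeq
    have hUo : @IsOpen ℕ tA (μ ⁻¹' V) := hpre V hV
    obtain ⟨g, hg, hgu⟩ := huniv Bool tS hKS (chi (μ ⁻¹' V)) (chi_continuous tA _ hUo)
    have h1 : chi V = g := hgu (chi V) ⟨chi_continuous tR V hV, chi_comp V μ⟩
    have h2 : chi V' = g := hgu (chi V')
      ⟨chi_continuous tR V' hV', (chi_comp V' μ).trans (by rw [hpeq])⟩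
    have hVV : chi V = chi V' := h1.trans h2.symm
    ext x
    rw [← chi_eq_true V x, ← chi_eq_true V' x, congrFun hVV x]
  -- nonempty opens of R pull back to nonempty (cofinite) opens of ℕ
  have hpne : ∀ V, @IsOpen R tR V → V.Nonempty → (μ ⁻¹' V).Nonempty := by
    intro V hV hVne
    rcases Set.eq_empty_or_nonempty (μ ⁻¹' V) with he | h
    · exfalso
      have : V = ∅ := hinj V ∅ hV (@isOpen_empty R tR) (by simp [he])
      rw [this] at hVne
      exact Set.not_nonempty_empty hVne
    · exact h
  -- μ-preimage reflects inclusion of opens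
  have hord : ∀ V W, @IsOpen R tR V → @IsOpen R tR W → μ ⁻¹' V ⊆ μ ⁻¹' W → V ⊆ W := by
    intro V W hV hW hsub
    have h1 : V ∩ W = V := hinj (V ∩ W) V (@IsOpen.inter R tR _ _ hV hW) hV
      (by rw [Set.preimage_inter]; exact Set.inter_eq_left.mpr hsub)
    exact Set.inter_eq_left.mp h1
  -- R has a point in every nonempty open set
  have htop : ∃ z : R, ∀ V, @IsOpen R tR V → V.Nonempty → z ∈ V := by
    set F : Set (Set R) := {V | @IsOpen R tR V ∧ V.Nonempty} with hF
    have hFne : F.Nonempty := ⟨Set.univ, @isOpen_univ R tR, ⟨μ 0, trivial⟩⟩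
    have hFopen : ∀ V ∈ F, @IsOpen R tR V := fun V hV => hV.1
    have hfil : ∀ V₁ ∈ F, ∀ V₂ ∈ F, ∃ V₃ ∈ F,
        WayBelowOpen tR V₃ V₁ ∧ WayBelowOpen tR V₃ V₂ := by
      intro V₁ hV₁ V₂ hV₂
      have hV₃o : @IsOpen R tR (V₁ ∩ V₂) := @IsOpen.inter R tR _ _ hV₁.1 hV₂.1
      have hc1 : ((μ ⁻¹' V₁)ᶜ).Finite := by
        have h1 := hpne V₁ hV₁.1 hV₁.2
        rcases hpre V₁ hV₁.1 with he | h
        · rw [he] at h1; exact absurd h1 Set.not_nonempty_empty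
        · exact h
      have hc2 : ((μ ⁻¹' V₂)ᶜ).Finite := by
        have h2 := hpne V₂ hV₂.1 hV₂.2
        rcases hpre V₂ hV₂.1 with he | h
        · rw [he] at h2; exact absurd h2 Set.not_nonempty_empty
        · exact h
      have hne : (V₁ ∩ V₂).Nonempty := by
        rcases Set.eq_empty_or_nonempty (V₁ ∩ V₂) with he | h
        · exfalso
          have hpe : μ ⁻¹' V₁ ∩ μ ⁻¹' V₂ = ∅ := by
            rw [← Set.preimage_inter, he]; simp
          have hsub2 : (Set.univ : Set ℕ) ⊆ (μ ⁻¹' V₁)ᶜ ∪ (μ ⁻¹' V₂)ᶜ := by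
            intro n _
            by_contra hn
            simp only [Set.mem_union, Set.mem_compl_iff, not_or, not_not] at hn
            have : n ∈ μ ⁻¹' V₁ ∩ μ ⁻¹' V₂ := ⟨hn.1, hn.2⟩
            rw [hpe] at this
            exact this
          exact Set.infinite_univ ((hc1.union hc2).subset hsub2)
        · exact h
      have hwb : ∀ V, @IsOpen R tR V → V₁ ∩ V₂ ⊆ V → WayBelowOpen tR (V₁ ∩ V₂) V := by
        intro V hVo hVsub D hDne hDopen hDdir hcov
        have hcomp := tA_compact (μ ⁻¹' (V₁ ∩ V₂)) (hpre _ hV₃o)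
          ((fun W => μ ⁻¹' W) '' D) (hDne.image _)
          (by rintro W' ⟨W, hWD, rfl⟩; exact hpre W (hDopen W hWD))
          (by
            rintro W1' ⟨W1, h1, rfl⟩ W2' ⟨W2, h2, rfl⟩
            obtain ⟨W3, h3, h13, h23⟩ := hDdir W1 h1 W2 h2
            exact ⟨μ ⁻¹' W3, ⟨W3, h3, rfl⟩, Set.preimage_mono h13, Set.preimage_mono h23⟩)
          (by
            intro x hx
            obtain ⟨W, hWD, hxW⟩ := hcov (hVsub hx)
            exact ⟨μ ⁻¹' W, ⟨W, hWD, rfl⟩, hxW⟩)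
        obtain ⟨W', ⟨W, hWD, rfl⟩, hsub'⟩ := hcomp
        exact ⟨W, hWD, hord _ _ hV₃o (hDopen W hWD) hsub'⟩
      exact ⟨V₁ ∩ V₂, ⟨hV₃o, hne⟩,
        hwb V₁ hV₁.1 Set.inter_subset_left, hwb V₂ hV₂.1 Set.inter_subset_right⟩
    rcases Set.eq_empty_or_nonempty (⋂₀ F) with hI | hI
    · obtain ⟨V, hVF, hVsub⟩ := hKR.2 F hFne hFopen hfil ∅ (@isOpen_empty R tR) (by rw [hI])
      exact absurd (Set.subset_empty_iff.mp hVsub) (Set.nonempty_iff_ne_empty.mp hVF.2)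
    · obtain ⟨z, hz⟩ := hI
      exact ⟨z, fun V hVo hVne => (Set.mem_sInter.mp hz) V ⟨hVo, hVne⟩⟩
  obtain ⟨ztop, hztop⟩ := htop
  -- factor the map into Johnstone's space through μ
  obtain ⟨g, ⟨hgc, hgμ⟩, _⟩ := huniv JT tJ hKJ fJ fJ_cont
  have hgpre : ∀ V : Set JT, JOpen V → @IsOpen R tR (g ⁻¹' V) :=
    fun V hV => @Continuous.isOpen_preimage R JT tR tJ g hgc V hV
  -- g ztop would be a generic point of the closure of the maximal points: contradiction
  rcases hgz : g ztop with ⟨m, ko⟩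
  cases ko with
  | none =>
    have hwmem : fJ (m + 1) ∈ Vmax m := by
      rintro (h | ⟨j, hj, _⟩)
      · simp only [fJ] at h; omega
      · exact absurd hj.symm (Option.some_ne_none _)
    have hmem : ztop ∈ g ⁻¹' Vmax m := by
      apply hztop
      · exact hgpre _ (Vmax_open m)
      · refine ⟨μ (m + 1), ?_⟩
        simp only [Set.mem_preimage]
        have hc : g (μ (m + 1)) = fJ (m + 1) := congrFun hgμ (m + 1)
        rw [hc]
        exact hwmem
    have hfin : g ztop ∈ Vmax m := hmem
    rw [hgz] at hfin
    exact hfin (Or.inl rfl)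
  | some k =>
    have hwmem : fJ (m + 1) ∈ Vfin m k := by
      rintro ⟨_, j, hj, _⟩
      exact absurd hj.symm (Option.some_ne_none _)
    have hmem : ztop ∈ g ⁻¹' Vfin m k := by
      apply hztop
      · exact hgpre _ (Vfin_open m k)
      · refine ⟨μ (m + 1), ?_⟩
        simp only [Set.mem_preimage]
        have hc : g (μ (m + 1)) = fJ (m + 1) := congrFun hgμ (m + 1)
        rw [hc]
        exact hwmem
    have hfin : g ztop ∈ Vfin m k := hmem
    rw [hgz] at hfin
    exact hfin ⟨rfl, k, rfl, le_refl k⟩
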